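/- Let G be a finite simple graph and let k ≥ 2 be a natural number. If every vertex of G has degree at most k, then every element of the poset Pos(G) has at most k+1 immediate successors (elements covering it) and at most 2k+6 strict successors in total. -/
import Mathlib


/-- The carrier of the poset `Pos(G)`: vertices, two copies of the vertices,
two copies of the edges, and four auxiliary elements. -/
inductive PosElem (V E : Type) : Type where
  | ver (v : V)
  | verA (v : V)
  | verB (v : V)
  | edge1 (e : E)
  | edge2 (e : E)
  | top1
  | top2
  | infA
  | infB

/-- The covering relation of the poset `Pos(G)`, for a graph `G` together with a
choice `ε` of an ordered pair of endpoints for each edge. -/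
inductive PosCov {V : Type} (G : SimpleGraph V) (ε : ↥G.edgeSet → V × V) :
    PosElem V ↥G.edgeSet → PosElem V ↥G.edgeSet → Prop where
  | ver_verA (v : V) : PosCov G ε (.ver v) (.verA v)
  | ver_verB (v : V) : PosCov G ε (.ver v) (.verB v)
  | verA_infA (v : V) : PosCov G ε (.verA v) .infA
  | verB_infB (v : V) : PosCov G ε (.verB v) .infB
  | edge1_top1 (e : ↥G.edgeSet) : PosCov G ε (.edge1 e) .top1
  | edge1_top2 (e : ↥G.edgeSet) : PosCov G ε (.edge1 e) .top2
  | edge2_top1 (e : ↥G.edgeSet) : PosCov G ε (.edge2 e) .top1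
  | edge2_top2 (e : ↥G.edgeSet) : PosCov G ε (.edge2 e) .top2
  | isolA_top1 (v : V) (hv : ∀ w, ¬ G.Adj v w) : PosCov G ε (.verA v) .top1
  | isolA_top2 (v : V) (hv : ∀ w, ¬ G.Adj v w) : PosCov G ε (.verA v) .top2
  | isolB_top1 (v : V) (hv : ∀ w, ¬ G.Adj v w) : PosCov G ε (.verB v) .top1
  | isolB_top2 (v : V) (hv : ∀ w, ¬ G.Adj v w) : PosCov G ε (.verB v) .top2
  | ua_edge1 (e : ↥G.edgeSet) : PosCov G ε (.verA (ε e).1) (.edge1 e)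
  | vb_edge1 (e : ↥G.edgeSet) : PosCov G ε (.verB (ε e).2) (.edge1 e)
  | ub_edge2 (e : ↥G.edgeSet) : PosCov G ε (.verB (ε e).1) (.edge2 e)
  | va_edge2 (e : ↥G.edgeSet) : PosCov G ε (.verA (ε e).2) (.edge2 e)

/-- The order of `Pos(G)`: the reflexive-transitive closure of the covering relation. -/
def PosLe {V : Type} (G : SimpleGraph V) (ε : ↥G.edgeSet → V × V)
    (x y : PosElem V ↥G.edgeSet) : Prop :=
  Relation.ReflTransGen (PosCov G ε) x y

/-- `ε` assigns to every edge an ordered pair of its two endpoints. -/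
def OrientOK {V : Type} (G : SimpleGraph V) (ε : ↥G.edgeSet → V × V) : Prop :=
  ∀ e : ↥G.edgeSet, (e : Sym2 V) = s((ε e).1, (ε e).2)

/-- A p-morphism with respect to given order relations: the homomorphism property (HP)
and the backward property (BP). -/
def IsPMorphismRel {α β : Type} (leP : α → α → Prop) (leQ : β → β → Prop)
    (h : α → β) : Prop :=
  (∀ x y, leP x y → leQ (h x) (h y)) ∧
  (∀ (x : α) (y : β), leQ (h x) y → ∃ z : α, leP x z ∧ h z = y)

/-- The strict order of `Pos(G)`. -/
def PosLt {V : Type} (G : SimpleGraph V) (ε : ↥G.edgeSet → V × V)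
    (x y : PosElem V ↥G.edgeSet) : Prop :=
  PosLe G ε x y ∧ x ≠ y

/-- `y` is an immediate successor of `x` in `Pos(G)`: `y` covers `x`. -/
def PosCovBy {V : Type} (G : SimpleGraph V) (ε : ↥G.edgeSet → V × V)
    (x y : PosElem V ↥G.edgeSet) : Prop :=
  PosLt G ε x y ∧ ∀ z, PosLt G ε x z → ¬ PosLt G ε z y

section Aux

open PosElem

variable {V : Type} {G : SimpleGraph V} {ε : ↥G.edgeSet → V × V}

/-- A rank function showing the covering relation is well-behaved. -/
def posRank {E : Type} : PosElem V E → ℕ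
  | .ver _ => 0
  | .verA _ => 1
  | .verB _ => 1
  | .edge1 _ => 2
  | .edge2 _ => 2
  | _ => 3

lemma posCov_rank {x y} (h : PosCov G ε x y) : posRank x < posRank y := by
  cases h <;> simp [posRank]

lemma posLe_rank {x y} (h : PosLe G ε x y) : posRank x ≤ posRank y := by
  induction h with
  | refl => exact le_refl _
  | tail _ h1 ih => exact ih.trans (posCov_rank h1).le

lemma posCov_ne {x y} (h : PosCov G ε x y) : x ≠ y :=
  fun e => absurd (posCov_rank h) (by simp [e])

lemma posCovBy_cov {x y} (h : PosCovBy G ε x y) : PosCov G ε x y := by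
  obtain ⟨⟨hle, hne⟩, hmin⟩ := h
  rcases hle.cases_head with rfl | ⟨c, hxc, hcy⟩
  · exact absurd rfl hne
  rcases hcy.cases_head with rfl | ⟨d, hcd, hdy⟩
  · exact hxc
  · exfalso
    refine hmin c ⟨Relation.ReflTransGen.single hxc, posCov_ne hxc⟩
      ⟨Relation.ReflTransGen.head hcd hdy, ?_⟩
    intro h
    exact absurd ((posCov_rank hcd).trans_le (posLe_rank hdy)) (by simp [h])

lemma succ_top1 {y} (h : PosLe G ε .top1 y) : y = .top1 := by
  induction h with
  | refl => rfl
  | tail _ h1 ih => subst ih; cases h1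

lemma succ_top2 {y} (h : PosLe G ε .top2 y) : y = .top2 := by
  induction h with
  | refl => rfl
  | tail _ h1 ih => subst ih; cases h1

lemma succ_infA {y} (h : PosLe G ε .infA y) : y = .infA := by
  induction h with
  | refl => rfl
  | tail _ h1 ih => subst ih; cases h1

lemma succ_infB {y} (h : PosLe G ε .infB y) : y = .infB := by
  induction h with
  | refl => rfl
  | tail _ h1 ih => subst ih; cases h1

lemma succ_edge1 {e y} (h : PosLe G ε (.edge1 e) y) :
    y = .edge1 e ∨ y = .top1 ∨ y = .top2 := by
  induction h with
  | refl => tauto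
  | tail _ h1 ih =>
    rcases ih with rfl | rfl | rfl
    · cases h1 <;> tauto
    · cases h1
    · cases h1

lemma succ_edge2 {e y} (h : PosLe G ε (.edge2 e) y) :
    y = .edge2 e ∨ y = .top1 ∨ y = .top2 := by
  induction h with
  | refl => tauto
  | tail _ h1 ih =>
    rcases ih with rfl | rfl | rfl
    · cases h1 <;> tauto
    · cases h1
    · cases h1

lemma succ_verA {v y} (h : PosLe G ε (.verA v) y) :
    y = .verA v ∨ y = .infA ∨ y = .top1 ∨ y = .top2 ∨
      (∃ e, (ε e).1 = v ∧ y = .edge1 e) ∨ (∃ e, (ε e).2 = v ∧ y = .edge2 e) := by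
  induction h with
  | refl => tauto
  | tail _ h1 ih =>
    rcases ih with rfl | rfl | rfl | rfl | ⟨e, he, rfl⟩ | ⟨e, he, rfl⟩
    · cases h1
      · tauto
      · tauto
      · tauto
      · exact Or.inr (Or.inr (Or.inr (Or.inr (Or.inl ⟨_, rfl, rfl⟩))))
      · exact Or.inr (Or.inr (Or.inr (Or.inr (Or.inr ⟨_, rfl, rfl⟩))))
    · cases h1
    · cases h1
    · cases h1
    · cases h1 <;> tauto
    · cases h1 <;> tauto

lemma succ_verB {v y} (h : PosLe G ε (.verB v) y) :
    y = .verB v ∨ y = .infB ∨ y = .top1 ∨ y = .top2 ∨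
      (∃ e, (ε e).2 = v ∧ y = .edge1 e) ∨ (∃ e, (ε e).1 = v ∧ y = .edge2 e) := by
  induction h with
  | refl => tauto
  | tail _ h1 ih =>
    rcases ih with rfl | rfl | rfl | rfl | ⟨e, he, rfl⟩ | ⟨e, he, rfl⟩
    · cases h1
      · tauto
      · tauto
      · tauto
      · exact Or.inr (Or.inr (Or.inr (Or.inr (Or.inl ⟨_, rfl, rfl⟩))))
      · exact Or.inr (Or.inr (Or.inr (Or.inr (Or.inr ⟨_, rfl, rfl⟩))))
    · cases h1
    · cases h1
    · cases h1
    · cases h1 <;> tauto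
    · cases h1 <;> tauto

lemma succ_ver {v y} (h : PosLe G ε (.ver v) y) :
    y = .ver v ∨ y = .verA v ∨ y = .verB v ∨ y = .infA ∨ y = .infB ∨
      y = .top1 ∨ y = .top2 ∨
      (∃ e, ((ε e).1 = v ∨ (ε e).2 = v) ∧ y = .edge1 e) ∨
      (∃ e, ((ε e).1 = v ∨ (ε e).2 = v) ∧ y = .edge2 e) := by
  induction h with
  | refl => tauto
  | tail _ h1 ih =>
    rcases ih with rfl | rfl | rfl | rfl | rfl | rfl | rfl | ⟨e, he, rfl⟩ | ⟨e, he, rfl⟩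
    · cases h1 <;> tauto
    · cases h1
      · tauto
      · tauto
      · tauto
      · exact Or.inr (Or.inr (Or.inr (Or.inr (Or.inr (Or.inr (Or.inr (Or.inl ⟨_, Or.inl rfl, rfl⟩)))))))
      · exact Or.inr (Or.inr (Or.inr (Or.inr (Or.inr (Or.inr (Or.inr (Or.inr ⟨_, Or.inr rfl, rfl⟩)))))))
    · cases h1
      · tauto
      · tauto
      · tauto
      · exact Or.inr (Or.inr (Or.inr (Or.inr (Or.inr (Or.inr (Or.inr (Or.inl ⟨_, Or.inr rfl, rfl⟩)))))))
      · exact Or.inr (Or.inr (Or.inr (Or.inr (Or.inr (Or.inr (Or.inr (Or.inr ⟨_, Or.inl rfl, rfl⟩)))))))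
    · cases h1
    · cases h1
    · cases h1
    · cases h1
    · cases h1 <;> tauto
    · cases h1 <;> tauto

instance posElemFinite {V E : Type} [Finite V] [Finite E] : Finite (PosElem V E) := by
  let f : (V ⊕ V ⊕ V) ⊕ (E ⊕ E) ⊕ Fin 4 → PosElem V E := fun x =>
    match x with
    | .inl (.inl v) => .ver v
    | .inl (.inr (.inl v)) => .verA v
    | .inl (.inr (.inr v)) => .verB v
    | .inr (.inl (.inl e)) => .edge1 e
    | .inr (.inl (.inr e)) => .edge2 e
    | .inr (.inr 0) => .top1
    | .inr (.inr 1) => .top2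
    | .inr (.inr 2) => .infA
    | .inr (.inr 3) => .infB
  apply Finite.of_surjective f
  intro p
  cases p with
  | ver v => exact ⟨.inl (.inl v), rfl⟩
  | verA v => exact ⟨.inl (.inr (.inl v)), rfl⟩
  | verB v => exact ⟨.inl (.inr (.inr v)), rfl⟩
  | edge1 e => exact ⟨.inr (.inl (.inl e)), rfl⟩
  | edge2 e => exact ⟨.inr (.inl (.inr e)), rfl⟩
  | top1 => exact ⟨.inr (.inr 0), rfl⟩
  | top2 => exact ⟨.inr (.inr 1), rfl⟩
  | infA => exact ⟨.inr (.inr 2), rfl⟩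
  | infB => exact ⟨.inr (.inr 3), rfl⟩

lemma card_AB {V : Type} [Fintype V] [DecidableEq V] (G : SimpleGraph V)
    [DecidableRel G.Adj] (ε : ↥G.edgeSet → V × V) (hε : OrientOK G ε) (v : V) :
    {e : ↥G.edgeSet | (ε e).1 = v}.ncard + {e : ↥G.edgeSet | (ε e).2 = v}.ncard
      ≤ G.degree v := by
  set A : Set ↥G.edgeSet := {e | (ε e).1 = v} with hA
  set B : Set ↥G.edgeSet := {e | (ε e).2 = v} with hB
  have hadj : ∀ e : ↥G.edgeSet, G.Adj (ε e).1 (ε e).2 := by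
    intro e
    have := e.2
    rw [hε e] at this
    exact this
  have hdisj : Disjoint A B := by
    rw [Set.disjoint_left]
    intro e he1 he2
    have := hadj e
    rw [Set.mem_setOf_eq] at he1 he2
    rw [he1, he2] at this
    exact G.irrefl this
  rw [← Set.ncard_union_eq hdisj (Set.toFinite _) (Set.toFinite _)]
  set f : ↥G.edgeSet → V := fun e => if (ε e).1 = v then (ε e).2 else (ε e).1 with hf
  have key : ∀ e ∈ A ∪ B, (e : Sym2 V) = s(v, f e) ∧ G.Adj v (f e) := by
    intro e he
    rcases he with he | he
    · rw [Set.mem_setOf_eq] at he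
      have : f e = (ε e).2 := by simp [hf, he]
      rw [this, ← he]
      exact ⟨hε e, hadj e⟩
    · rw [Set.mem_setOf_eq] at he
      have h1 : (ε e).1 ≠ v := by
        intro h
        have := hadj e
        rw [h, he] at this
        exact G.irrefl this
      have : f e = (ε e).1 := by simp [hf, h1]
      rw [this, ← he]
      exact ⟨by rw [hε e]; exact Sym2.eq_swap, (hadj e).symm⟩
  have hle : (A ∪ B).ncard ≤ (G.neighborSet v).ncard := by
    apply Set.ncard_le_ncard_of_injOn f
    · intro e he
      exact (key e he).2
    · intro e he e' he' hee
      apply Subtype.ext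
      have := (key e he).1
      rw [this, (key e' he').1, hee]
  have : (G.neighborSet v).ncard = G.degree v := by
    rw [Set.ncard_eq_toFinset_card']; rfl
  omega

end Aux

theorem degree_bounds {V : Type} [Fintype V] [DecidableEq V]
    (G : SimpleGraph V) [DecidableRel G.Adj]
    (ε : ↥G.edgeSet → V × V) (hε : OrientOK G ε)
    (k : ℕ) (hk : 2 ≤ k) (hdeg : ∀ v : V, G.degree v ≤ k) :
    ∀ x : PosElem V ↥G.edgeSet,
      {y | PosCovBy G ε x y}.ncard ≤ k + 1 ∧
      {y | PosLt G ε x y}.ncard ≤ 2 * k + 6 := by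
  have hadj : ∀ e : ↥G.edgeSet, G.Adj (ε e).1 (ε e).2 := by
    intro e
    have := e.2
    rw [hε e] at this
    exact this
  intro x
  -- covers are always strict successors
  have hcs : ∀ x : PosElem V ↥G.edgeSet,
      {y | PosCovBy G ε x y} ⊆ {y | PosLt G ε x y} := fun _ _ hy => hy.1
  have him : ∀ (f : ↥G.edgeSet → PosElem V ↥G.edgeSet) (s : Set ↥G.edgeSet),
      (f '' s).ncard ≤ s.ncard := fun f s => Set.ncard_image_le (Set.toFinite _)
  have hun : ∀ s t : Set (PosElem V ↥G.edgeSet), (s ∪ t).ncard ≤ s.ncard + t.ncard :=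
    fun s t => Set.ncard_union_le s t
  cases x with
  | top1 =>
    have he : {y | PosLt G ε (.top1 : PosElem V ↥G.edgeSet) y} = ∅ := by
      ext y
      simp only [Set.mem_setOf_eq, Set.mem_empty_iff_false, iff_false]
      rintro ⟨h1, h2⟩
      exact h2 (succ_top1 h1).symm
    constructor
    · calc {y | PosCovBy G ε (.top1 : PosElem V ↥G.edgeSet) y}.ncard
          ≤ {y | PosLt G ε (.top1 : PosElem V ↥G.edgeSet) y}.ncard :=
            Set.ncard_le_ncard (hcs _) (Set.toFinite _)
        _ = 0 := by rw [he, Set.ncard_empty]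
        _ ≤ k + 1 := by omega
    · rw [he, Set.ncard_empty]; omega
  | top2 =>
    have he : {y | PosLt G ε (.top2 : PosElem V ↥G.edgeSet) y} = ∅ := by
      ext y
      simp only [Set.mem_setOf_eq, Set.mem_empty_iff_false, iff_false]
      rintro ⟨h1, h2⟩
      exact h2 (succ_top2 h1).symm
    constructor
    · calc {y | PosCovBy G ε (.top2 : PosElem V ↥G.edgeSet) y}.ncard
          ≤ {y | PosLt G ε (.top2 : PosElem V ↥G.edgeSet) y}.ncard :=
            Set.ncard_le_ncard (hcs _) (Set.toFinite _)
        _ = 0 := by rw [he, Set.ncard_empty]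
        _ ≤ k + 1 := by omega
    · rw [he, Set.ncard_empty]; omega
  | infA =>
    have he : {y | PosLt G ε (.infA : PosElem V ↥G.edgeSet) y} = ∅ := by
      ext y
      simp only [Set.mem_setOf_eq, Set.mem_empty_iff_false, iff_false]
      rintro ⟨h1, h2⟩
      exact h2 (succ_infA h1).symm
    constructor
    · calc {y | PosCovBy G ε (.infA : PosElem V ↥G.edgeSet) y}.ncard
          ≤ {y | PosLt G ε (.infA : PosElem V ↥G.edgeSet) y}.ncard :=
            Set.ncard_le_ncard (hcs _) (Set.toFinite _)
        _ = 0 := by rw [he, Set.ncard_empty]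
        _ ≤ k + 1 := by omega
    · rw [he, Set.ncard_empty]; omega
  | infB =>
    have he : {y | PosLt G ε (.infB : PosElem V ↥G.edgeSet) y} = ∅ := by
      ext y
      simp only [Set.mem_setOf_eq, Set.mem_empty_iff_false, iff_false]
      rintro ⟨h1, h2⟩
      exact h2 (succ_infB h1).symm
    constructor
    · calc {y | PosCovBy G ε (.infB : PosElem V ↥G.edgeSet) y}.ncard
          ≤ {y | PosLt G ε (.infB : PosElem V ↥G.edgeSet) y}.ncard :=
            Set.ncard_le_ncard (hcs _) (Set.toFinite _)
        _ = 0 := by rw [he, Set.ncard_empty]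
        _ ≤ k + 1 := by omega
    · rw [he, Set.ncard_empty]; omega
  | edge1 e =>
    have hsub : {y | PosLt G ε (.edge1 e) y} ⊆
        {(.top1 : PosElem V ↥G.edgeSet), .top2} := by
      rintro y ⟨h1, h2⟩
      rcases succ_edge1 h1 with rfl | rfl | rfl
      · exact absurd rfl h2
      · exact Set.mem_insert _ _
      · exact Set.mem_insert_of_mem _ rfl
    have hb : {y | PosLt G ε (.edge1 e) y}.ncard ≤ 2 := by
      calc {y | PosLt G ε (.edge1 e) y}.ncard
          ≤ ({(.top1 : PosElem V ↥G.edgeSet), .top2} : Set _).ncard :=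
            Set.ncard_le_ncard hsub (Set.toFinite _)
        _ ≤ ({(.top2 : PosElem V ↥G.edgeSet)} : Set _).ncard + 1 :=
            Set.ncard_insert_le _ _
        _ = 2 := by rw [Set.ncard_singleton]
    refine ⟨?_, by omega⟩
    calc {y | PosCovBy G ε (.edge1 e) y}.ncard
        ≤ {y | PosLt G ε (.edge1 e) y}.ncard :=
          Set.ncard_le_ncard (hcs _) (Set.toFinite _)
      _ ≤ k + 1 := by omega
  | edge2 e =>
    have hsub : {y | PosLt G ε (.edge2 e) y} ⊆
        {(.top1 : PosElem V ↥G.edgeSet), .top2} := by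
      rintro y ⟨h1, h2⟩
      rcases succ_edge2 h1 with rfl | rfl | rfl
      · exact absurd rfl h2
      · exact Set.mem_insert _ _
      · exact Set.mem_insert_of_mem _ rfl
    have hb : {y | PosLt G ε (.edge2 e) y}.ncard ≤ 2 := by
      calc {y | PosLt G ε (.edge2 e) y}.ncard
          ≤ ({(.top1 : PosElem V ↥G.edgeSet), .top2} : Set _).ncard :=
            Set.ncard_le_ncard hsub (Set.toFinite _)
        _ ≤ ({(.top2 : PosElem V ↥G.edgeSet)} : Set _).ncard + 1 :=
            Set.ncard_insert_le _ _
        _ = 2 := by rw [Set.ncard_singleton]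
    refine ⟨?_, by omega⟩
    calc {y | PosCovBy G ε (.edge2 e) y}.ncard
        ≤ {y | PosLt G ε (.edge2 e) y}.ncard :=
          Set.ncard_le_ncard (hcs _) (Set.toFinite _)
      _ ≤ k + 1 := by omega
  | verA v =>
    have hAB : {e : ↥G.edgeSet | (ε e).1 = v}.ncard
        + {e : ↥G.edgeSet | (ε e).2 = v}.ncard ≤ k :=
      (card_AB G ε hε v).trans (hdeg v)
    set A : Set ↥G.edgeSet := {e | (ε e).1 = v} with hA
    set B : Set ↥G.edgeSet := {e | (ε e).2 = v} with hB
    constructor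
    · by_cases hiso : ∀ w, ¬ G.Adj v w
      · have hsub : {y | PosCovBy G ε (.verA v) y} ⊆
            {(.infA : PosElem V ↥G.edgeSet), .top1, .top2} := by
          intro y hy
          have h := posCovBy_cov hy
          cases h with
          | verA_infA => exact Set.mem_insert _ _
          | isolA_top1 => exact Set.mem_insert_of_mem _ (Set.mem_insert _ _)
          | isolA_top2 =>
            exact Set.mem_insert_of_mem _ (Set.mem_insert_of_mem _ rfl)
          | ua_edge1 e => exact absurd (hadj e) (hiso _)
          | va_edge2 e => exact absurd (hadj e).symm (hiso _)
        calc {y | PosCovBy G ε (.verA v) y}.ncard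
            ≤ ({(.infA : PosElem V ↥G.edgeSet), .top1, .top2} : Set _).ncard :=
              Set.ncard_le_ncard hsub (Set.toFinite _)
          _ ≤ ({(.top1 : PosElem V ↥G.edgeSet), .top2} : Set _).ncard + 1 :=
              Set.ncard_insert_le _ _
          _ ≤ ({(.top2 : PosElem V ↥G.edgeSet)} : Set _).ncard + 1 + 1 := by
              have := Set.ncard_insert_le (.top1 : PosElem V ↥G.edgeSet)
                ({(.top2 : PosElem V ↥G.edgeSet)} : Set _)
              omega
          _ ≤ k + 1 := by rw [Set.ncard_singleton]; omega
      · have hsub : {y | PosCovBy G ε (.verA v) y} ⊆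
            insert (.infA : PosElem V ↥G.edgeSet)
              (PosElem.edge1 '' A ∪ PosElem.edge2 '' B) := by
          intro y hy
          have h := posCovBy_cov hy
          cases h with
          | verA_infA => exact Set.mem_insert _ _
          | isolA_top1 _ hv => exact absurd hv hiso
          | isolA_top2 _ hv => exact absurd hv hiso
          | ua_edge1 e =>
            exact Set.mem_insert_of_mem _ (Or.inl ⟨e, rfl, rfl⟩)
          | va_edge2 e =>
            exact Set.mem_insert_of_mem _ (Or.inr ⟨e, rfl, rfl⟩)
        calc {y | PosCovBy G ε (.verA v) y}.ncard
            ≤ (insert (.infA : PosElem V ↥G.edgeSet)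
                (PosElem.edge1 '' A ∪ PosElem.edge2 '' B)).ncard :=
              Set.ncard_le_ncard hsub (Set.toFinite _)
          _ ≤ (PosElem.edge1 '' A ∪ PosElem.edge2 '' B).ncard + 1 :=
              Set.ncard_insert_le _ _
          _ ≤ k + 1 := by
              have h1 := hun (PosElem.edge1 '' A) (PosElem.edge2 '' B)
              have h2 := him PosElem.edge1 (A)
              have h3 := him PosElem.edge2 (B)
              omega
    · have hsub : {y | PosLt G ε (.verA v) y} ⊆
          insert (.infA : PosElem V ↥G.edgeSet) (insert .top1 (insert .top2
            (PosElem.edge1 '' A ∪ PosElem.edge2 '' B))) := by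
        rintro y ⟨h1, h2⟩
        rcases succ_verA h1 with rfl | rfl | rfl | rfl | ⟨e, he, rfl⟩ | ⟨e, he, rfl⟩
        · exact absurd rfl h2
        · exact Set.mem_insert _ _
        · exact Set.mem_insert_of_mem _ (Set.mem_insert _ _)
        · exact Set.mem_insert_of_mem _ (Set.mem_insert_of_mem _ (Set.mem_insert _ _))
        · exact Set.mem_insert_of_mem _ (Set.mem_insert_of_mem _
            (Set.mem_insert_of_mem _ (Or.inl ⟨e, he, rfl⟩)))
        · exact Set.mem_insert_of_mem _ (Set.mem_insert_of_mem _
            (Set.mem_insert_of_mem _ (Or.inr ⟨e, he, rfl⟩)))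
      have h0 := Set.ncard_le_ncard hsub (Set.toFinite _)
      have h1 := Set.ncard_insert_le (.infA : PosElem V ↥G.edgeSet)
        (insert .top1 (insert .top2 (PosElem.edge1 '' A ∪ PosElem.edge2 '' B)))
      have h2 := Set.ncard_insert_le (.top1 : PosElem V ↥G.edgeSet)
        (insert .top2 (PosElem.edge1 '' A ∪ PosElem.edge2 '' B))
      have h3 := Set.ncard_insert_le (.top2 : PosElem V ↥G.edgeSet)
        (PosElem.edge1 '' A ∪ PosElem.edge2 '' B)
      have h4 := hun (PosElem.edge1 '' A) (PosElem.edge2 '' B)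
      have h5 := him PosElem.edge1 (A)
      have h6 := him PosElem.edge2 (B)
      omega
  | verB v =>
    have hAB : {e : ↥G.edgeSet | (ε e).1 = v}.ncard
        + {e : ↥G.edgeSet | (ε e).2 = v}.ncard ≤ k :=
      (card_AB G ε hε v).trans (hdeg v)
    set A : Set ↥G.edgeSet := {e | (ε e).1 = v} with hA
    set B : Set ↥G.edgeSet := {e | (ε e).2 = v} with hB
    constructor
    · by_cases hiso : ∀ w, ¬ G.Adj v w
      · have hsub : {y | PosCovBy G ε (.verB v) y} ⊆
            {(.infB : PosElem V ↥G.edgeSet), .top1, .top2} := by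
          intro y hy
          have h := posCovBy_cov hy
          cases h with
          | verB_infB => exact Set.mem_insert _ _
          | isolB_top1 => exact Set.mem_insert_of_mem _ (Set.mem_insert _ _)
          | isolB_top2 =>
            exact Set.mem_insert_of_mem _ (Set.mem_insert_of_mem _ rfl)
          | vb_edge1 e => exact absurd (hadj e).symm (hiso _)
          | ub_edge2 e => exact absurd (hadj e) (hiso _)
        calc {y | PosCovBy G ε (.verB v) y}.ncard
            ≤ ({(.infB : PosElem V ↥G.edgeSet), .top1, .top2} : Set _).ncard :=
              Set.ncard_le_ncard hsub (Set.toFinite _)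
          _ ≤ ({(.top1 : PosElem V ↥G.edgeSet), .top2} : Set _).ncard + 1 :=
              Set.ncard_insert_le _ _
          _ ≤ ({(.top2 : PosElem V ↥G.edgeSet)} : Set _).ncard + 1 + 1 := by
              have := Set.ncard_insert_le (.top1 : PosElem V ↥G.edgeSet)
                ({(.top2 : PosElem V ↥G.edgeSet)} : Set _)
              omega
          _ ≤ k + 1 := by rw [Set.ncard_singleton]; omega
      · have hsub : {y | PosCovBy G ε (.verB v) y} ⊆
            insert (.infB : PosElem V ↥G.edgeSet)
              (PosElem.edge1 '' B ∪ PosElem.edge2 '' A) := by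
          intro y hy
          have h := posCovBy_cov hy
          cases h with
          | verB_infB => exact Set.mem_insert _ _
          | isolB_top1 _ hv => exact absurd hv hiso
          | isolB_top2 _ hv => exact absurd hv hiso
          | vb_edge1 e =>
            exact Set.mem_insert_of_mem _ (Or.inl ⟨e, rfl, rfl⟩)
          | ub_edge2 e =>
            exact Set.mem_insert_of_mem _ (Or.inr ⟨e, rfl, rfl⟩)
        calc {y | PosCovBy G ε (.verB v) y}.ncard
            ≤ (insert (.infB : PosElem V ↥G.edgeSet)
                (PosElem.edge1 '' B ∪ PosElem.edge2 '' A)).ncard :=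
              Set.ncard_le_ncard hsub (Set.toFinite _)
          _ ≤ (PosElem.edge1 '' B ∪ PosElem.edge2 '' A).ncard + 1 :=
              Set.ncard_insert_le _ _
          _ ≤ k + 1 := by
              have h1 := hun (PosElem.edge1 '' B) (PosElem.edge2 '' A)
              have h2 := him PosElem.edge1 (B)
              have h3 := him PosElem.edge2 (A)
              omega
    · have hsub : {y | PosLt G ε (.verB v) y} ⊆
          insert (.infB : PosElem V ↥G.edgeSet) (insert .top1 (insert .top2
            (PosElem.edge1 '' B ∪ PosElem.edge2 '' A))) := by
        rintro y ⟨h1, h2⟩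
        rcases succ_verB h1 with rfl | rfl | rfl | rfl | ⟨e, he, rfl⟩ | ⟨e, he, rfl⟩
        · exact absurd rfl h2
        · exact Set.mem_insert _ _
        · exact Set.mem_insert_of_mem _ (Set.mem_insert _ _)
        · exact Set.mem_insert_of_mem _ (Set.mem_insert_of_mem _ (Set.mem_insert _ _))
        · exact Set.mem_insert_of_mem _ (Set.mem_insert_of_mem _
            (Set.mem_insert_of_mem _ (Or.inl ⟨e, he, rfl⟩)))
        · exact Set.mem_insert_of_mem _ (Set.mem_insert_of_mem _
            (Set.mem_insert_of_mem _ (Or.inr ⟨e, he, rfl⟩)))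
      have h0 := Set.ncard_le_ncard hsub (Set.toFinite _)
      have h1 := Set.ncard_insert_le (.infB : PosElem V ↥G.edgeSet)
        (insert .top1 (insert .top2 (PosElem.edge1 '' B ∪ PosElem.edge2 '' A)))
      have h2 := Set.ncard_insert_le (.top1 : PosElem V ↥G.edgeSet)
        (insert .top2 (PosElem.edge1 '' B ∪ PosElem.edge2 '' A))
      have h3 := Set.ncard_insert_le (.top2 : PosElem V ↥G.edgeSet)
        (PosElem.edge1 '' B ∪ PosElem.edge2 '' A)
      have h4 := hun (PosElem.edge1 '' B) (PosElem.edge2 '' A)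
      have h5 := him PosElem.edge1 (B)
      have h6 := him PosElem.edge2 (A)
      omega
  | ver v =>
    have hAB : {e : ↥G.edgeSet | (ε e).1 = v}.ncard
        + {e : ↥G.edgeSet | (ε e).2 = v}.ncard ≤ k :=
      (card_AB G ε hε v).trans (hdeg v)
    set A : Set ↥G.edgeSet := {e | (ε e).1 = v} with hA
    set B : Set ↥G.edgeSet := {e | (ε e).2 = v} with hB
    constructor
    · have hsub : {y | PosCovBy G ε (.ver v) y} ⊆
          {(.verA v : PosElem V ↥G.edgeSet), .verB v} := by
        intro y hy
        have h := posCovBy_cov hy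
        cases h with
        | ver_verA => exact Set.mem_insert _ _
        | ver_verB => exact Set.mem_insert_of_mem _ rfl
      calc {y | PosCovBy G ε (.ver v) y}.ncard
          ≤ ({(.verA v : PosElem V ↥G.edgeSet), .verB v} : Set _).ncard :=
            Set.ncard_le_ncard hsub (Set.toFinite _)
        _ ≤ ({(.verB v : PosElem V ↥G.edgeSet)} : Set _).ncard + 1 :=
            Set.ncard_insert_le _ _
        _ ≤ k + 1 := by rw [Set.ncard_singleton]; omega
    · have hsub : {y | PosLt G ε (.ver v) y} ⊆
          insert (.verA v : PosElem V ↥G.edgeSet) (insert (.verB v)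
            (insert .infA (insert .infB (insert .top1 (insert .top2
              (PosElem.edge1 '' (A ∪ B) ∪ PosElem.edge2 '' (A ∪ B))))))) := by
        rintro y ⟨h1, h2⟩
        rcases succ_ver h1 with rfl | rfl | rfl | rfl | rfl | rfl | rfl
          | ⟨e, he, rfl⟩ | ⟨e, he, rfl⟩
        · exact absurd rfl h2
        · exact Set.mem_insert _ _
        · exact Set.mem_insert_of_mem _ (Set.mem_insert _ _)
        · exact Set.mem_insert_of_mem _ (Set.mem_insert_of_mem _ (Set.mem_insert _ _))
        · exact Set.mem_insert_of_mem _ (Set.mem_insert_of_mem _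
            (Set.mem_insert_of_mem _ (Set.mem_insert _ _)))
        · exact Set.mem_insert_of_mem _ (Set.mem_insert_of_mem _
            (Set.mem_insert_of_mem _ (Set.mem_insert_of_mem _ (Set.mem_insert _ _))))
        · exact Set.mem_insert_of_mem _ (Set.mem_insert_of_mem _
            (Set.mem_insert_of_mem _ (Set.mem_insert_of_mem _
              (Set.mem_insert_of_mem _ (Set.mem_insert _ _)))))
        · exact Set.mem_insert_of_mem _ (Set.mem_insert_of_mem _
            (Set.mem_insert_of_mem _ (Set.mem_insert_of_mem _
              (Set.mem_insert_of_mem _ (Set.mem_insert_of_mem _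
                (Or.inl ⟨e, he, rfl⟩))))))
        · exact Set.mem_insert_of_mem _ (Set.mem_insert_of_mem _
            (Set.mem_insert_of_mem _ (Set.mem_insert_of_mem _
              (Set.mem_insert_of_mem _ (Set.mem_insert_of_mem _
                (Or.inr ⟨e, he, rfl⟩))))))
      have h0 := Set.ncard_le_ncard hsub (Set.toFinite _)
      set U : Set (PosElem V ↥G.edgeSet) :=
        PosElem.edge1 '' (A ∪ B) ∪ PosElem.edge2 '' (A ∪ B) with hU
      have h1 := Set.ncard_insert_le (.verA v : PosElem V ↥G.edgeSet)
        (insert (.verB v) (insert .infA (insert .infB (insert .top1 (insert .top2 U)))))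
      have h2 := Set.ncard_insert_le (.verB v : PosElem V ↥G.edgeSet)
        (insert .infA (insert .infB (insert .top1 (insert .top2 U))))
      have h3 := Set.ncard_insert_le (.infA : PosElem V ↥G.edgeSet)
        (insert .infB (insert .top1 (insert .top2 U)))
      have h4 := Set.ncard_insert_le (.infB : PosElem V ↥G.edgeSet)
        (insert .top1 (insert .top2 U))
      have h5 := Set.ncard_insert_le (.top1 : PosElem V ↥G.edgeSet) (insert .top2 U)
      have h6 := Set.ncard_insert_le (.top2 : PosElem V ↥G.edgeSet) U
      have h7 := hun (PosElem.edge1 '' (A ∪ B)) (PosElem.edge2 '' (A ∪ B))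
      rw [← hU] at h7
      have h8 := him PosElem.edge1 (A ∪ B)
      have h9 := him PosElem.edge2 (A ∪ B)
      have h10 := Set.ncard_union_le A B
      omega
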